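/- At every point z ∈ ℂ with D_0(z) ≠ 0, the function F, regarded as a smooth function of the real coordinates (x, y) with z = x + iy, satisfies the Wirtinger-derivative identity (1/2)(∂F/∂x + i ∂F/∂y)(z) = [B_2(z) D_0(z)² − B_0(z)(|A_1(z)|² + |B_1(z)|²) + A_0(z) conj(A_1(z)) B_1(z) + conj(A_0(z)) A_1(z) conj(B_1(z))] / D_0(z)³. -/

import Mathlib

open Complex Finset

noncomputable section VdB

/-- The real-linear map `w ↦ p•w + q•conj w`. -/
def wl (p q : ℂ) : ℂ →L[ℝ] ℂ :=
  p • (ContinuousLinearMap.id ℝ ℂ) + q • (Complex.conjCLE.toContinuousLinearMap)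

@[simp] lemma wl_apply (p q w : ℂ) : wl p q w = p * w + q * (starRingEnd ℂ) w := by
  simp [wl, ContinuousLinearMap.add_apply, ContinuousLinearMap.smul_apply, smul_eq_mul]

abbrev HasWD (g : ℂ → ℂ) (p q : ℂ) (z : ℂ) : Prop := HasFDerivAt g (wl p q) z

lemma HasWD.congr' {g : ℂ → ℂ} {p q p' q' z : ℂ} (h : HasWD g p q z)
    (hp : p' = p) (hq : q' = q) : HasWD g p' q' z := by rw [hp, hq]; exact h

lemma HasWD.funcongr {g g' : ℂ → ℂ} {p q z : ℂ} (h : HasWD g p q z)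
    (hg : ∀ w, g' w = g w) : HasWD g' p q z := by
  rw [show g' = g from funext hg]; exact h

lemma hasWD_of_hasDerivAt {g : ℂ → ℂ} {g' z : ℂ} (h : HasDerivAt g g' z) :
    HasWD g g' 0 z := by
  refine ((h.hasFDerivAt).restrictScalars ℝ).congr_fderiv ?_
  ext w
  simp [mul_comm]

lemma HasWD.wconj {g : ℂ → ℂ} {p q z : ℂ} (h : HasWD g p q z) :
    HasWD (fun w => (starRingEnd ℂ) (g w)) ((starRingEnd ℂ) q) ((starRingEnd ℂ) p) z := by
  refine HasFDerivAt.congr_fderiv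
    ((Complex.conjCLE.toContinuousLinearMap.hasFDerivAt (x := g z)).comp z h) ?_
  ext w
  simp [Function.comp, map_add, map_mul, mul_comm]
  ring

lemma HasWD.wadd {u v : ℂ → ℂ} {p1 q1 p2 q2 z : ℂ} (h1 : HasWD u p1 q1 z)
    (h2 : HasWD v p2 q2 z) : HasWD (fun w => u w + v w) (p1 + p2) (q1 + q2) z := by
  refine (HasFDerivAt.add h1 h2).congr_fderiv ?_
  ext w; simp; ring

lemma HasWD.wsub {u v : ℂ → ℂ} {p1 q1 p2 q2 z : ℂ} (h1 : HasWD u p1 q1 z)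
    (h2 : HasWD v p2 q2 z) : HasWD (fun w => u w - v w) (p1 - p2) (q1 - q2) z := by
  refine (HasFDerivAt.sub h1 h2).congr_fderiv ?_
  ext w; simp; ring

lemma HasWD.wmul {u v : ℂ → ℂ} {p1 q1 p2 q2 z : ℂ} (h1 : HasWD u p1 q1 z)
    (h2 : HasWD v p2 q2 z) :
    HasWD (fun w => u w * v w) (p1 * v z + u z * p2) (q1 * v z + u z * q2) z := by
  refine (HasFDerivAt.mul h1 h2).congr_fderiv ?_
  ext w
  simp only [wl_apply, ContinuousLinearMap.add_apply, ContinuousLinearMap.coe_smul',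
    Pi.smul_apply, smul_eq_mul]
  ring

lemma hasWD_sum {ι : Type*} (s : Finset ι) {g : ι → ℂ → ℂ} {p q : ι → ℂ} {z : ℂ}
    (h : ∀ i ∈ s, HasWD (g i) (p i) (q i) z) :
    HasWD (fun w => ∑ i ∈ s, g i w) (∑ i ∈ s, p i) (∑ i ∈ s, q i) z := by
  refine (HasFDerivAt.fun_sum (fun i (hi : i ∈ s) => h i hi)).congr_fderiv ?_
  ext w
  simp [ContinuousLinearMap.sum_apply, Finset.sum_mul, Finset.sum_add_distrib]

lemma HasWD.winv {v : ℂ → ℂ} {p2 q2 z : ℂ}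
    (h2 : HasWD v p2 q2 z) (hv : v z ≠ 0) :
    HasWD (fun w => (v w)⁻¹) (-p2 / (v z) ^ 2) (-q2 / (v z) ^ 2) z := by
  refine ((hasFDerivAt_inv' (𝕜 := ℝ) hv).comp z h2).congr_fderiv ?_
  ext w
  simp only [wl_apply, ContinuousLinearMap.coe_comp', Function.comp_apply,
    ContinuousLinearMap.neg_apply, ContinuousLinearMap.mulLeftRight_apply]
  field_simp
  ring

lemma HasWD.wdiv {u v : ℂ → ℂ} {p1 q1 p2 q2 z : ℂ} (h1 : HasWD u p1 q1 z)
    (h2 : HasWD v p2 q2 z) (hv : v z ≠ 0) :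
    HasWD (fun w => u w / v w) ((p1 * v z - u z * p2) / (v z) ^ 2)
      ((q1 * v z - u z * q2) / (v z) ^ 2) z := by
  have h3 := h1.wmul (h2.winv hv)
  refine (h3.funcongr (fun w => (div_eq_mul_inv (u w) (v w)))).congr' ?_ ?_ <;>
    field_simp <;> ring

lemma HasWD.sqrtRe {g : ℂ → ℂ} {p q z : ℂ} (h : HasWD g p q z) (hne : (g z).re ≠ 0) :
    HasWD (fun w => ((Real.sqrt ((g w).re) : ℝ) : ℂ))
      (((1 / (2 * Real.sqrt ((g z).re)) : ℝ) : ℂ) * ((p + (starRingEnd ℂ) q) / 2))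
      (((1 / (2 * Real.sqrt ((g z).re)) : ℝ) : ℂ) * ((q + (starRingEnd ℂ) p) / 2)) z := by
  have h1 : HasFDerivAt (fun w => (g w).re) (Complex.reCLM.comp (wl p q)) z :=
    (Complex.reCLM.hasFDerivAt).comp z h
  have h2 := (Real.hasDerivAt_sqrt hne).comp_hasFDerivAt z h1
  refine ((Complex.ofRealCLM.hasFDerivAt).comp z h2).congr_fderiv ?_
  ext w
  simp only [wl_apply, ContinuousLinearMap.coe_comp', Function.comp_apply,
    ContinuousLinearMap.coe_smul', Pi.smul_apply, Complex.ofRealCLM_apply,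
    Complex.reCLM_apply, smul_eq_mul]
  push_cast
  rw [show (((p * w + q * (starRingEnd ℂ) w : ℂ)).re : ℝ) =
      (((p * w + q * (starRingEnd ℂ) w) + (starRingEnd ℂ) (p * w + q * (starRingEnd ℂ) w)) / 2 : ℂ) by
    rw [Complex.add_conj]; push_cast; ring]
  simp only [map_add, map_mul, Complex.conj_conj]
  ring

lemma HasWD.wirtinger {g : ℂ → ℂ} {p q z : ℂ} (h : HasWD g p q z) :
    DifferentiableAt ℝ g z ∧
      (1 / 2 : ℂ) * (fderiv ℝ g z 1 + Complex.I * fderiv ℝ g z Complex.I) = q := by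
  refine ⟨h.differentiableAt, ?_⟩
  rw [h.fderiv]
  simp only [wl_apply, map_one, Complex.conj_I, mul_one]
  ring_nf
  rw [Complex.I_sq]
  ring

lemma vdb_key (a0 c0 a1 c1 b1 e1 b0 d0 b2 qd : ℂ)
    (rel : d0^2 = b0^2 - c0*a0) (hqd : qd * d0 = b0*e1 - a0*c1)
    (hd0 : d0 ≠ 0) (hden : b0*d0 + b0^2 - c0*a0 ≠ 0) :
    ((b2*d0 + b1*qd + e1*b1 + b0*b2 - 2*(c1*a1)) * (b0*d0 + b0^2 - c0*a0)
      - (b1*d0 + b0*b1 - c0*a1) * (e1*d0 + b0*qd + 2*(b0*e1) - 2*(c1*a0)))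
      / (b0*d0 + b0^2 - c0*a0)^2
    = (b2*d0^2 - b0*(c1*a1 + e1*b1) + a0*c1*b1 + c0*a1*e1) / d0^3 := by
  rw [div_eq_div_iff (pow_ne_zero 2 hden) (pow_ne_zero 3 hd0)]
  linear_combination
    (-(a0*c0^2*a1*e1) - a0^2*c0*c1*b1 + d0^2*c0*a1*e1 + 2*d0^2*a0*c1*b1
      - d0^2*a0*c0*b2 - d0^3*e1*b1 + b0*a0*c0*e1*b1 + b0*a0*c0*a1*c1
      + 2*b0*d0*c0*a1*e1 + 2*b0*d0*a0*c1*b1 - 2*b0*d0^2*e1*b1 - 2*b0*d0^2*a1*c1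
      + b0*d0^3*b2 + b0^2*c0*a1*e1 + b0^2*a0*c1*b1 - 2*b0^2*d0*e1*b1
      - 2*b0^2*d0*a1*c1 + b0^2*d0^2*b2 - b0^3*e1*b1 - b0^3*a1*c1) * rel
    + (-(d0^2*a0*c0*b1) + b0*d0^2*c0*a1) * hqd

lemma entire_deriv {g : ℂ → ℂ} (hg : Differentiable ℂ g) : Differentiable ℂ (deriv g) := by
  have h1 : AnalyticOnNhd ℂ g Set.univ := fun x _ => hg.analyticAt x
  exact fun w => ((h1.deriv) w (Set.mem_univ w)).differentiableAt

variable {m : ℕ} (f : Fin m → ℂ → ℂ)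

def b0F : ℂ → ℂ := fun w => ∑ j, f j w * (starRingEnd ℂ) (f j w)
def A0F : ℂ → ℂ := fun w => ∑ j, (f j w) ^ 2
def A1F : ℂ → ℂ := fun w => ∑ j, f j w * deriv (f j) w
def B1F : ℂ → ℂ := fun w => ∑ j, (starRingEnd ℂ) (f j w) * deriv (f j) w
def SF : ℂ → ℂ := fun w => (b0F f w) ^ 2 - A0F f w * (starRingEnd ℂ) (A0F f w)
def d0F : ℂ → ℂ := fun w => ((Real.sqrt ((SF f w).re) : ℝ) : ℂ)
def NF : ℂ → ℂ := fun w =>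
  B1F f w * d0F f w + b0F f w * B1F f w - (starRingEnd ℂ) (A0F f w) * A1F f w
def DenF : ℂ → ℂ := fun w =>
  b0F f w * d0F f w + (b0F f w) ^ 2 - (starRingEnd ℂ) (A0F f w) * A0F f w

lemma b0F_real_conj (z : ℂ) : (starRingEnd ℂ) (b0F f z) = b0F f z := by
  simp only [b0F, map_sum, map_mul, Complex.conj_conj]
  exact Finset.sum_congr rfl fun j _ => mul_comm _ _

variable (hf : ∀ j, Differentiable ℂ (f j)) (z : ℂ)
include hf

lemma hasWD_fj (j : Fin m) : HasWD (f j) (deriv (f j) z) 0 z :=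
  hasWD_of_hasDerivAt ((hf j).differentiableAt.hasDerivAt)

lemma hasWD_dfj (j : Fin m) : HasWD (deriv (f j)) (deriv (deriv (f j)) z) 0 z :=
  hasWD_of_hasDerivAt ((entire_deriv (hf j)).differentiableAt.hasDerivAt)

lemma hasWD_cfj (j : Fin m) :
    HasWD (fun w => (starRingEnd ℂ) (f j w)) 0 ((starRingEnd ℂ) (deriv (f j) z)) z :=
  ((hasWD_fj f hf z j).wconj).congr' (by simp) rfl

lemma hasWD_b0F : HasWD (b0F f) (B1F f z) ((starRingEnd ℂ) (B1F f z)) z := by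
  refine HasWD.congr'
    (hasWD_sum Finset.univ (fun j _ => (hasWD_fj f hf z j).wmul (hasWD_cfj f hf z j))) ?_ ?_
  · show B1F f z = _
    exact Finset.sum_congr rfl fun j _ => by ring
  · show (starRingEnd ℂ) (B1F f z) = _
    simp only [B1F, map_sum, map_mul, Complex.conj_conj]
    exact Finset.sum_congr rfl fun j _ => by ring

lemma hasWD_A0F : HasWD (A0F f) (2 * A1F f z) 0 z := by
  have hj : ∀ j ∈ Finset.univ, HasWD (fun w => (f j w) ^ 2)
      (deriv (f j) z * f j z + f j z * deriv (f j) z) (0 * f j z + f j z * 0) z :=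
    fun j _ => ((hasWD_fj f hf z j).wmul (hasWD_fj f hf z j)).funcongr (fun w => sq (f j w))
  refine HasWD.congr' (hasWD_sum Finset.univ hj) ?_ ?_
  · show 2 * A1F f z = _
    simp only [A1F, Finset.mul_sum]
    exact Finset.sum_congr rfl fun j _ => by ring
  · simp

lemma hasWD_cA0F : HasWD (fun w => (starRingEnd ℂ) (A0F f w)) 0
    (2 * (starRingEnd ℂ) (A1F f z)) z :=
  (hasWD_A0F f hf z).wconj.congr' (by simp) (by rw [map_mul, Complex.conj_ofNat])

lemma hasWD_A1F : ∃ p, HasWD (A1F f) p 0 z := by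
  refine ⟨_, HasWD.congr'
    (hasWD_sum Finset.univ (fun j _ => (hasWD_fj f hf z j).wmul (hasWD_dfj f hf z j)))
    rfl ?_⟩
  simp

lemma hasWD_B1F : ∃ p, HasWD (B1F f) p
    (∑ j, (starRingEnd ℂ) (deriv (f j) z) * deriv (f j) z) z := by
  refine ⟨_, HasWD.congr'
    (hasWD_sum Finset.univ (fun j _ => (hasWD_cfj f hf z j).wmul (hasWD_dfj f hf z j)))
    rfl ?_⟩
  exact Finset.sum_congr rfl fun j _ => by ring

lemma hasWD_SF : HasWD (SF f)
    (2 * b0F f z * B1F f z - 2 * A1F f z * (starRingEnd ℂ) (A0F f z))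
    (2 * b0F f z * (starRingEnd ℂ) (B1F f z)
      - 2 * A0F f z * (starRingEnd ℂ) (A1F f z)) z := by
  have h1 := ((hasWD_b0F f hf z).wmul (hasWD_b0F f hf z)).funcongr
    (g' := fun w => (b0F f w) ^ 2) (fun w => sq (b0F f w))
  have h2 := (hasWD_A0F f hf z).wmul (hasWD_cA0F f hf z)
  refine HasWD.congr' (h1.wsub h2) ?_ ?_ <;> ring

lemma hasWD_d0F (hpos : 0 < (SF f z).re) : HasWD (d0F f)
    ((b0F f z * B1F f z - (starRingEnd ℂ) (A0F f z) * A1F f z) / d0F f z)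
    ((b0F f z * (starRingEnd ℂ) (B1F f z) - A0F f z * (starRingEnd ℂ) (A1F f z))
      / d0F f z) z := by
  have hs0 : ((Real.sqrt ((SF f z).re) : ℝ) : ℂ) ≠ 0 :=
    Complex.ofReal_ne_zero.mpr (ne_of_gt (Real.sqrt_pos.mpr hpos))
  refine HasWD.congr' ((hasWD_SF f hf z).sqrtRe (ne_of_gt hpos)) ?_ ?_ <;>
  · show _ / d0F f z = _
    simp only [d0F, map_sub, map_mul, Complex.conj_conj, b0F_real_conj f z,
      Complex.conj_ofNat]
    push_cast
    field_simp
    ring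

lemma hasWD_NF (hpos : 0 < (SF f z).re) : ∃ p, HasWD (NF f) p
    ((∑ j, (starRingEnd ℂ) (deriv (f j) z) * deriv (f j) z) * d0F f z
      + B1F f z * ((b0F f z * (starRingEnd ℂ) (B1F f z)
          - A0F f z * (starRingEnd ℂ) (A1F f z)) / d0F f z)
      + (starRingEnd ℂ) (B1F f z) * B1F f z
      + b0F f z * (∑ j, (starRingEnd ℂ) (deriv (f j) z) * deriv (f j) z)
      - 2 * (starRingEnd ℂ) (A1F f z) * A1F f z) z := by
  obtain ⟨pB1, hB1W⟩ := hasWD_B1F f hf z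
  obtain ⟨pA1, hA1W⟩ := hasWD_A1F f hf z
  have h1 := hB1W.wmul (hasWD_d0F f hf z hpos)
  have h2 := (hasWD_b0F f hf z).wmul hB1W
  have h3 := (hasWD_cA0F f hf z).wmul hA1W
  exact ⟨_, HasWD.congr' ((h1.wadd h2).wsub h3) rfl (by ring)⟩

lemma hasWD_DenF (hpos : 0 < (SF f z).re) : ∃ p, HasWD (DenF f) p
    ((starRingEnd ℂ) (B1F f z) * d0F f z
      + b0F f z * ((b0F f z * (starRingEnd ℂ) (B1F f z)
          - A0F f z * (starRingEnd ℂ) (A1F f z)) / d0F f z)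
      + 2 * b0F f z * (starRingEnd ℂ) (B1F f z)
      - 2 * (starRingEnd ℂ) (A1F f z) * A0F f z) z := by
  have h1 := (hasWD_b0F f hf z).wmul (hasWD_d0F f hf z hpos)
  have h2 := ((hasWD_b0F f hf z).wmul (hasWD_b0F f hf z)).funcongr
    (g' := fun w => (b0F f w) ^ 2) (fun w => sq (b0F f w))
  have h3 := (hasWD_cA0F f hf z).wmul (hasWD_A0F f hf z)
  exact ⟨_, HasWD.congr' ((h1.wadd h2).wsub h3) rfl (by ring)⟩

lemma hasWD_FF (hpos : 0 < (SF f z).re) (hden : DenF f z ≠ 0) :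
    ∃ p, HasWD (fun w => NF f w / DenF f w) p
      ((((∑ j, (starRingEnd ℂ) (deriv (f j) z) * deriv (f j) z) * d0F f z
          + B1F f z * ((b0F f z * (starRingEnd ℂ) (B1F f z)
              - A0F f z * (starRingEnd ℂ) (A1F f z)) / d0F f z)
          + (starRingEnd ℂ) (B1F f z) * B1F f z
          + b0F f z * (∑ j, (starRingEnd ℂ) (deriv (f j) z) * deriv (f j) z)
          - 2 * (starRingEnd ℂ) (A1F f z) * A1F f z) * DenF f z
        - NF f z * ((starRingEnd ℂ) (B1F f z) * d0F f z
          + b0F f z * ((b0F f z * (starRingEnd ℂ) (B1F f z)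
              - A0F f z * (starRingEnd ℂ) (A1F f z)) / d0F f z)
          + 2 * b0F f z * (starRingEnd ℂ) (B1F f z)
          - 2 * (starRingEnd ℂ) (A1F f z) * A0F f z)) / (DenF f z) ^ 2) z := by
  obtain ⟨pN, hN⟩ := hasWD_NF f hf z hpos
  obtain ⟨pD, hD⟩ := hasWD_DenF f hf z hpos
  exact ⟨_, hN.wdiv hD hden⟩

end VdB

theorem F_wirtinger_derivative
    {n : ℕ} (f : Fin (n + 1) → ℂ → ℂ)
    (hf_entire : ∀ j, Differentiable ℂ (f j))
    (hf_real : ∀ j, ∀ x : ℝ, (f j (x : ℂ)).im = 0)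
    (A0 A1 B1 : ℂ → ℂ) (B0 B2 D0 : ℂ → ℝ) (F : ℂ → ℂ)
    (hA0 : ∀ z, A0 z = ∑ j, (f j z) ^ 2)
    (hA1 : ∀ z, A1 z = ∑ j, f j z * deriv (f j) z)
    (hB1 : ∀ z, B1 z = ∑ j, (starRingEnd ℂ) (f j z) * deriv (f j) z)
    (hB0 : ∀ z, B0 z = ∑ j, ‖f j z‖ ^ 2)
    (hB2 : ∀ z, B2 z = ∑ j, ‖deriv (f j) z‖ ^ 2)
    (hD0 : ∀ z, D0 z = Real.sqrt ((B0 z) ^ 2 - ‖A0 z‖ ^ 2))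
    (hF : ∀ z, F z = (B1 z * (D0 z : ℂ) + (B0 z : ℂ) * B1 z - (starRingEnd ℂ) (A0 z) * A1 z)
        / ((B0 z : ℂ) * (D0 z : ℂ) + (B0 z : ℂ) ^ 2 - (starRingEnd ℂ) (A0 z) * A0 z))
    (z : ℂ) (hz : D0 z ≠ 0) :
    DifferentiableAt ℝ F z ∧
      (1 / 2 : ℂ) * (fderiv ℝ F z 1 + I * fderiv ℝ F z I)
        = ((B2 z : ℂ) * (D0 z : ℂ) ^ 2
            - (B0 z : ℂ) * ((‖A1 z‖ ^ 2 : ℝ) + (‖B1 z‖ ^ 2 : ℝ))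
            + A0 z * (starRingEnd ℂ) (A1 z) * B1 z
            + (starRingEnd ℂ) (A0 z) * A1 z * (starRingEnd ℂ) (B1 z))
          / (D0 z : ℂ) ^ 3 := by
  classical
  have habs2 : ∀ w : ℂ, ((‖w‖ : ℝ) : ℂ) ^ 2 = w * (starRingEnd ℂ) w := by
    intro w
    rw [Complex.mul_conj]
    norm_cast
    exact Complex.sq_norm w
  have hb0c : ∀ w, ((B0 w : ℝ) : ℂ) = b0F f w := by
    intro w
    rw [hB0 w]
    simp only [b0F]
    push_cast
    exact Finset.sum_congr rfl fun j _ => habs2 _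
  have hA0e : ∀ w, A0 w = A0F f w := fun w => hA0 w
  have hA1e : ∀ w, A1 w = A1F f w := fun w => hA1 w
  have hB1e : ∀ w, B1 w = B1F f w := fun w => hB1 w
  have hSre : ∀ w, (SF f w).re = (B0 w) ^ 2 - ‖A0 w‖ ^ 2 := by
    intro w
    have h1 : SF f w = (((B0 w) ^ 2 - ‖A0 w‖ ^ 2 : ℝ) : ℂ) := by
      simp only [SF]
      rw [← hb0c w, ← hA0e w]
      push_cast
      rw [habs2 (A0 w)]
      try ring
    rw [h1, Complex.ofReal_re]
  have hd0e : ∀ w, ((D0 w : ℝ) : ℂ) = d0F f w := by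
    intro w
    simp only [d0F, hSre w]
    rw [hD0 w]
  have hspos : 0 < (B0 z) ^ 2 - ‖A0 z‖ ^ 2 := by
    rcases lt_or_ge 0 ((B0 z) ^ 2 - ‖A0 z‖ ^ 2) with h | h
    · exact h
    · exact absurd (by rw [hD0 z]; exact Real.sqrt_eq_zero'.mpr h) hz
  have hposS : 0 < (SF f z).re := by rw [hSre z]; exact hspos
  have hd0pos : 0 < D0 z := by rw [hD0 z]; exact Real.sqrt_pos.mpr hspos
  have hb0nonneg : 0 ≤ B0 z := by
    rw [hB0 z]; exact Finset.sum_nonneg fun j _ => sq_nonneg _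
  have hd0sq : (D0 z) ^ 2 = (B0 z) ^ 2 - ‖A0 z‖ ^ 2 := by
    rw [hD0 z]; exact Real.sq_sqrt hspos.le
  have hd0cne : ((D0 z : ℝ) : ℂ) ≠ 0 := Complex.ofReal_ne_zero.mpr (ne_of_gt hd0pos)
  have relc : ((D0 z : ℝ) : ℂ) ^ 2
      = ((B0 z : ℝ) : ℂ) ^ 2 - (starRingEnd ℂ) (A0 z) * A0 z := by
    have h1 := congrArg (fun t : ℝ => (t : ℂ)) hd0sq
    push_cast at h1
    rw [h1, habs2 (A0 z)]
    ring
  have hdenc : ((B0 z : ℝ) : ℂ) * ((D0 z : ℝ) : ℂ) + ((B0 z : ℝ) : ℂ) ^ 2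
      - (starRingEnd ℂ) (A0 z) * A0 z ≠ 0 := by
    have h2 : ((B0 z : ℝ) : ℂ) * ((D0 z : ℝ) : ℂ) + ((B0 z : ℝ) : ℂ) ^ 2
        - (starRingEnd ℂ) (A0 z) * A0 z = ((B0 z * D0 z + D0 z ^ 2 : ℝ) : ℂ) := by
      push_cast
      linear_combination -relc
    rw [h2]
    refine Complex.ofReal_ne_zero.mpr (ne_of_gt ?_)
    nlinarith [hd0pos, hb0nonneg]
  have hDenFz : DenF f z = ((B0 z : ℝ) : ℂ) * ((D0 z : ℝ) : ℂ) + ((B0 z : ℝ) : ℂ) ^ 2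
      - (starRingEnd ℂ) (A0 z) * A0 z := by
    simp only [DenF]
    rw [← hb0c z, ← hd0e z, ← hA0e z]
  have hdenF : DenF f z ≠ 0 := by rw [hDenFz]; exact hdenc
  have hFeq : ∀ w, F w = NF f w / DenF f w := by
    intro w
    rw [hF w]
    simp only [NF, DenF]
    rw [hB1e w, hA0e w, hA1e w, hb0c w, hd0e w]
  obtain ⟨pF, hFW⟩ := hasWD_FF f hf_entire z hposS hdenF
  have hmain := (hFW.funcongr hFeq).wirtinger
  refine ⟨hmain.1, ?_⟩
  rw [hmain.2]
  have hNFz : NF f z = B1 z * ((D0 z : ℝ) : ℂ) + ((B0 z : ℝ) : ℂ) * B1 z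
      - (starRingEnd ℂ) (A0 z) * A1 z := by
    simp only [NF]
    rw [← hB1e z, ← hA0e z, ← hA1e z, ← hb0c z, ← hd0e z]
  have hB2c : (∑ j, (starRingEnd ℂ) (deriv (f j) z) * deriv (f j) z)
      = ((B2 z : ℝ) : ℂ) := by
    rw [hB2 z]
    push_cast
    exact Finset.sum_congr rfl fun j _ => by rw [habs2]; ring
  rw [hNFz, hDenFz, hB2c, ← hB1e z, ← hA0e z, ← hA1e z, ← hb0c z, ← hd0e z]
  have hqd : ((((B0 z : ℝ) : ℂ) * (starRingEnd ℂ) (B1 z)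
      - A0 z * (starRingEnd ℂ) (A1 z)) / ((D0 z : ℝ) : ℂ)) * ((D0 z : ℝ) : ℂ)
      = ((B0 z : ℝ) : ℂ) * (starRingEnd ℂ) (B1 z) - A0 z * (starRingEnd ℂ) (A1 z) :=
    div_mul_cancel₀ _ hd0cne
  have hkey := vdb_key (A0 z) ((starRingEnd ℂ) (A0 z)) (A1 z) ((starRingEnd ℂ) (A1 z))
    (B1 z) ((starRingEnd ℂ) (B1 z)) ((B0 z : ℝ) : ℂ) ((D0 z : ℝ) : ℂ) ((B2 z : ℝ) : ℂ)
    ((((B0 z : ℝ) : ℂ) * (starRingEnd ℂ) (B1 z)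
      - A0 z * (starRingEnd ℂ) (A1 z)) / ((D0 z : ℝ) : ℂ))
    relc hqd hd0cne hdenc
  refine Eq.trans ?_ (Eq.trans hkey ?_)
  · ring
  · rw [show ((‖A1 z‖ ^ 2 : ℝ) : ℂ) = (starRingEnd ℂ) (A1 z) * A1 z from by
        push_cast; rw [habs2]; try ring,
      show ((‖B1 z‖ ^ 2 : ℝ) : ℂ) = (starRingEnd ℂ) (B1 z) * B1 z from by
        push_cast; rw [habs2]; try ring]
    try ring
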